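/- Let G be a finite group, R a commutative ring, and φ : G → R^×. The rank-1 module R_φ is a direct summand of a finite direct sum of permutation modules R(G/H) (H ranging over subgroups of G) if and only if R = Σ_{H ≤ G} [G:H]·(I^φ_H)², where I^φ_H is the annihilator ideal of {1 − φ(h) : h ∈ H}. -/

import Mathlib

/-- The ideal `I^φ_H = {r ∈ R : (1 - φ(h))·r = 0 for all h ∈ H}`, the annihilator of
`{1 - φ(h) : h ∈ H}`. -/
def Iphi {R : Type*} [CommRing R] {G : Type*} [Group G] (φ : G →* Rˣ) (H : Subgroup G) :
    Ideal R where
  carrier := {r : R | ∀ h ∈ H, (1 - ((φ h : Rˣ) : R)) * r = 0}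
  add_mem' := by
    intro a b ha hb h hh
    rw [mul_add, ha h hh, hb h hh, add_zero]
  zero_mem' := by intro h hh; rw [mul_zero]
  smul_mem' := by
    intro c r hr h hh
    simp only [smul_eq_mul]
    rw [mul_comm c r, ← mul_assoc, hr h hh, zero_mul]

/-- `R_φ` is a direct summand of a permutation `RG`-module: there are finitely many
subgroups `H i` of `G`, `RG`-module maps `f i : R_φ → R(G/H i)` (encoded by the images
`x i` of `1 ∈ R_φ`, which must be `φ`-semi-invariant) and `RG`-module maps
`g i : R(G/H i) → R_φ` (i.e. `R`-linear maps satisfying `g (s • m) = φ(s)·g m`) whose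
composite `∑ i, g i ∘ f i` is the identity of `R_φ`. -/
def IsPermSummand (R : Type*) [CommRing R] (G : Type*) [Group G] (φ : G →* Rˣ) : Prop :=
  ∃ (n : ℕ) (Hs : Fin n → Subgroup G)
    (x : ∀ i, (G ⧸ Hs i) →₀ R)
    (g : ∀ i, ((G ⧸ Hs i) →₀ R) →ₗ[R] R),
    (∀ i (s : G), ((Representation.ofMulAction R G (G ⧸ Hs i)) s (MonoidAlgebra.ofCoeff (x i))).coeff = ((φ s : Rˣ) : R) • x i) ∧
    (∀ i (s : G) (m : (G ⧸ Hs i) →₀ R),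
      g i ((Representation.ofMulAction R G (G ⧸ Hs i)) s (MonoidAlgebra.ofCoeff m)).coeff = ((φ s : Rˣ) : R) * g i m) ∧
    (∑ i, g i (x i)) = 1

section Aux

variable {R : Type*} [CommRing R] {G : Type*} [Group G] (φ : G →* Rˣ)

open Finsupp

lemma unit_fix {H : Subgroup G} {u : R} (hu : u ∈ Iphi φ H) {h : G} (hh : h ∈ H) :
    ((φ h : Rˣ) : R) * u = u := by
  have := hu h hh
  rw [sub_mul, one_mul, sub_eq_zero] at this
  exact this.symm

lemma unit_fix_inv {H : Subgroup G} {u : R} (hu : u ∈ Iphi φ H) {h : G} (hh : h ∈ H) :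
    (((φ h)⁻¹ : Rˣ) : R) * u = u := by
  rw [← map_inv]
  exact unit_fix φ hu (inv_mem hh)

lemma ofMulAction_coeff_apply' {X : Type*} [MulAction G X] (s : G) (x : X →₀ R) (c : X) :
    ((Representation.ofMulAction R G X) s (MonoidAlgebra.ofCoeff x)).coeff c = x (s⁻¹ • c) :=
  Representation.coeff_ofMulAction s _ c

lemma ofMulAction_single' {X : Type*} [MulAction G X] (s : G) (c : X) (r : R) :
    ((Representation.ofMulAction R G X) s (MonoidAlgebra.ofCoeff (Finsupp.single c r))).coeff
      = Finsupp.single (s • c) r := by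
  rw [MonoidAlgebra.ofCoeff_single, Representation.ofMulAction_single, MonoidAlgebra.coeff_single]

/-- Forward direction key computation. -/
lemma perm_mem [Finite G] (H : Subgroup G) (x : (G ⧸ H) →₀ R) (g : ((G ⧸ H) →₀ R) →ₗ[R] R)
    (hx : ∀ s : G, ((Representation.ofMulAction R G (G ⧸ H)) s (MonoidAlgebra.ofCoeff x)).coeff = ((φ s : Rˣ) : R) • x)
    (hg : ∀ (s : G) (m : (G ⧸ H) →₀ R),
      g ((Representation.ofMulAction R G (G ⧸ H)) s (MonoidAlgebra.ofCoeff m)).coeff = ((φ s : Rˣ) : R) * g m) :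
    g x ∈ Ideal.span {((H.index : ℕ) : R)} * (Iphi φ H) ^ 2 := by
  classical
  have : Fintype (G ⧸ H) := Fintype.ofFinite _
  set c₀ : G ⧸ H := QuotientGroup.mk 1 with hc₀
  set u : R := x c₀ with hudef
  set a : R := g (Finsupp.single c₀ 1) with hadef
  have hmk : ∀ t : G, (t • c₀ : G ⧸ H) = QuotientGroup.mk t := by
    intro t
    rw [hc₀, MulAction.Quotient.smul_mk, smul_eq_mul, mul_one]
  have hu : u ∈ Iphi φ H := by
    intro h hh
    have key := DFunLike.congr_fun (hx h) c₀
    rw [ofMulAction_coeff_apply', Finsupp.smul_apply, smul_eq_mul] at key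
    have hfix : (h⁻¹ • c₀ : G ⧸ H) = c₀ := by
      rw [hmk, hc₀]
      exact QuotientGroup.eq.mpr (by simpa using hh)
    rw [hfix] at key
    rw [sub_mul, one_mul, ← key, sub_self]
  have ha : a ∈ Iphi φ H := by
    intro h hh
    have key := hg h (Finsupp.single c₀ 1)
    rw [ofMulAction_single'] at key
    have hfix : (h • c₀ : G ⧸ H) = c₀ := by
      rw [hmk, hc₀]
      exact QuotientGroup.eq.mpr (by simpa using inv_mem hh)
    rw [hfix] at key
    rw [sub_mul, one_mul, ← key, sub_self]
  have hterm : ∀ c : G ⧸ H, x c • g (Finsupp.single c 1) = u * a := by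
    intro c
    induction c using QuotientGroup.induction_on with
    | H t =>
      have h1 : x (QuotientGroup.mk t) = ((φ t⁻¹ : Rˣ) : R) * u := by
        have key := DFunLike.congr_fun (hx t⁻¹) c₀
        rw [ofMulAction_coeff_apply', Finsupp.smul_apply, smul_eq_mul, inv_inv,
          hmk] at key
        exact key
      have h2 : g (Finsupp.single (QuotientGroup.mk t : G ⧸ H) 1) = ((φ t : Rˣ) : R) * a := by
        have key := hg t (Finsupp.single c₀ 1)
        rw [ofMulAction_single', hmk] at key
        exact key
      rw [h1, h2, smul_eq_mul]
      have hc : ((φ t⁻¹ : Rˣ) : R) * ((φ t : Rˣ) : R) = 1 := by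
        rw [← Units.val_mul, ← map_mul, inv_mul_cancel, map_one, Units.val_one]
      calc ((φ t⁻¹ : Rˣ) : R) * u * (((φ t : Rˣ) : R) * a)
          = (((φ t⁻¹ : Rˣ) : R) * ((φ t : Rˣ) : R)) * (u * a) := by ring
        _ = u * a := by rw [hc, one_mul]
  have hgx : g x = ∑ c : G ⧸ H, x c • g (Finsupp.single c 1) := by
    conv_lhs => rw [← Finsupp.sum_single x]
    rw [map_finsuppSum, Finsupp.sum_fintype]
    · refine Finset.sum_congr rfl fun c _ => ?_
      rw [← map_smul, Finsupp.smul_single, smul_eq_mul, mul_one]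
    · intro c; simp
  have hcard : (Fintype.card (G ⧸ H) : R) = ((H.index : ℕ) : R) := by
    rw [Subgroup.index, Nat.card_eq_fintype_card]
  have hval : g x = ((H.index : ℕ) : R) * (u * a) := by
    rw [hgx]
    rw [Finset.sum_congr rfl fun c _ => hterm c, Finset.sum_const, Finset.card_univ,
      nsmul_eq_mul, hcard]
  rw [hval]
  exact Ideal.mul_mem_mul (Ideal.mem_span_singleton_self _)
    (by rw [sq]; exact Ideal.mul_mem_mul hu ha)

/-- Reverse direction key construction. -/
lemma exists_perm [Finite G] (H : Subgroup G) {u v : R}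
    (hu : u ∈ Iphi φ H) (hv : v ∈ Iphi φ H) :
    ∃ (x : (G ⧸ H) →₀ R) (g : ((G ⧸ H) →₀ R) →ₗ[R] R),
      (∀ s : G, ((Representation.ofMulAction R G (G ⧸ H)) s (MonoidAlgebra.ofCoeff x)).coeff = ((φ s : Rˣ) : R) • x) ∧
      (∀ (s : G) (m : (G ⧸ H) →₀ R),
        g ((Representation.ofMulAction R G (G ⧸ H)) s (MonoidAlgebra.ofCoeff m)).coeff = ((φ s : Rˣ) : R) * g m) ∧
      g x = ((H.index : ℕ) : R) * (u * v) := by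
  classical
  have : Fintype (G ⧸ H) := Fintype.ofFinite _
  have hcoset : ∀ s t : G, s⁻¹ * t ∈ H → ∀ r : R, (r ∈ Iphi φ H) →
      (((φ t)⁻¹ : Rˣ) : R) * r = (((φ s)⁻¹ : Rˣ) : R) * r := by
    intro s t hst r hr
    have h1 : t = s * (s⁻¹ * t) := by group
    rw [h1, map_mul, mul_inv, Units.val_mul, mul_assoc, unit_fix_inv φ hr hst]
  -- the semi-invariant vector
  let w : G ⧸ H → R := fun c => Quotient.liftOn' c (fun s => (((φ s)⁻¹ : Rˣ) : R) * u)
    (fun s t hst => (hcoset s t (QuotientGroup.leftRel_apply.mp hst) u hu).symm)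
  let wv : G ⧸ H → R := fun c => Quotient.liftOn' c (fun s => ((φ s : Rˣ) : R) * v)
    (fun s t hst => by
      have h' : s⁻¹ * t ∈ H := QuotientGroup.leftRel_apply.mp hst
      show ((φ s : Rˣ) : R) * v = ((φ t : Rˣ) : R) * v
      conv_rhs => rw [show t = s * (s⁻¹ * t) by group, map_mul, Units.val_mul, mul_assoc,
        unit_fix φ hv h'])
  have hw : ∀ t : G, w (QuotientGroup.mk t) = (((φ t)⁻¹ : Rˣ) : R) * u := fun t => rfl
  have hwv : ∀ t : G, wv (QuotientGroup.mk t) = ((φ t : Rˣ) : R) * v := fun t => rfl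
  have hsmul : ∀ (s t : G), (s • (QuotientGroup.mk t : G ⧸ H)) = QuotientGroup.mk (s * t) :=
    fun s t => MulAction.Quotient.smul_mk H s t
  refine ⟨Finsupp.equivFunOnFinite.symm w, Finsupp.linearCombination R wv, ?_, ?_, ?_⟩
  · intro s
    ext c
    rw [ofMulAction_coeff_apply', Finsupp.smul_apply, smul_eq_mul]
    induction c using QuotientGroup.induction_on with
    | H t =>
      rw [hsmul]
      show w (QuotientGroup.mk (s⁻¹ * t)) = _ * w (QuotientGroup.mk t)
      rw [hw, hw]
      have : (φ (s⁻¹ * t))⁻¹ = (φ t)⁻¹ * φ s := by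
        rw [map_mul, map_inv, mul_inv, inv_inv]
        exact mul_comm _ _
      rw [this, Units.val_mul]
      ring
  · intro s m
    induction m using Finsupp.induction_linear with
    | zero => simp
    | add a b ha hb =>
      simp only [MonoidAlgebra.ofCoeff_add, map_add, MonoidAlgebra.coeff_add, ha, hb, mul_add]
    | single c r =>
      rw [ofMulAction_single', Finsupp.linearCombination_single,
        Finsupp.linearCombination_single, smul_eq_mul, smul_eq_mul]
      induction c using QuotientGroup.induction_on with
      | H t =>
        rw [hsmul, hwv, hwv, map_mul, Units.val_mul]
        ring
  · rw [Finsupp.linearCombination_apply, Finsupp.sum_fintype _ _ (fun c => zero_smul R (wv c))]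
    have hterm : ∀ c : G ⧸ H,
        (Finsupp.equivFunOnFinite.symm w) c • wv c = u * v := by
      intro c
      induction c using QuotientGroup.induction_on with
      | H t =>
        rw [show ((Finsupp.equivFunOnFinite.symm w) (QuotientGroup.mk t) : R)
            = w (QuotientGroup.mk t) from rfl, hw, hwv, smul_eq_mul]
        calc (((φ t)⁻¹ : Rˣ) : R) * u * (((φ t : Rˣ) : R) * v)
            = ((((φ t)⁻¹ : Rˣ) : R) * ((φ t : Rˣ) : R)) * (u * v) := by ring
          _ = u * v := by rw [← Units.val_mul, inv_mul_cancel, Units.val_one, one_mul]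
    rw [Finset.sum_congr rfl fun c _ => hterm c, Finset.sum_const, Finset.card_univ,
      nsmul_eq_mul, Subgroup.index, Nat.card_eq_fintype_card]

/-- Elements of `R` realized as `∑ i, g i (x i)` for some permutation-summand-type data. -/
def PermElt (r : R) : Prop :=
  ∃ (ι : Type) (hι : Fintype ι) (Hs : ι → Subgroup G)
    (x : ∀ i, (G ⧸ Hs i) →₀ R)
    (g : ∀ i, ((G ⧸ Hs i) →₀ R) →ₗ[R] R),
    (∀ i (s : G), ((Representation.ofMulAction R G (G ⧸ Hs i)) s (MonoidAlgebra.ofCoeff (x i))).coeff = ((φ s : Rˣ) : R) • x i) ∧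
    (∀ i (s : G) (m : (G ⧸ Hs i) →₀ R),
      g i ((Representation.ofMulAction R G (G ⧸ Hs i)) s (MonoidAlgebra.ofCoeff m)).coeff = ((φ s : Rˣ) : R) * g i m) ∧
    ((@Finset.univ ι hι).sum fun i => g i (x i)) = r

/-- Those elements form an ideal. -/
def PermIdeal : Ideal R where
  carrier := {r | PermElt φ r}
  zero_mem' := by
    exact ⟨PEmpty, inferInstance, fun i => i.elim, fun i => i.elim, fun i => i.elim,
      fun i => i.elim, fun i => i.elim, by simp⟩
  add_mem' := by
    rintro a b ⟨ι, hι, Hs, x, g, h1, h2, h3⟩ ⟨κ, hκ, Hs', x', g', h1', h2', h3'⟩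
    refine ⟨ι ⊕ κ, @instFintypeSum ι κ hι hκ, Sum.elim Hs Hs',
      fun i => Sum.rec (motive := fun i => (G ⧸ Sum.elim Hs Hs' i) →₀ R) x x' i,
      fun i => Sum.rec (motive := fun i => ((G ⧸ Sum.elim Hs Hs' i) →₀ R) →ₗ[R] R) g g' i,
      ?_, ?_, ?_⟩
    · rintro (i | i) s
      · exact h1 i s
      · exact h1' i s
    · rintro (i | i) s m
      · exact h2 i s m
      · exact h2' i s m
    · rw [@Fintype.sum_sum_type ι κ _ hι hκ]
      show (∑ i : ι, g i (x i)) + (∑ i : κ, g' i (x' i)) = a + b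
      rw [h3, h3']
  smul_mem' := by
    rintro c r ⟨ι, hι, Hs, x, g, h1, h2, h3⟩
    refine ⟨ι, hι, Hs, x, fun i => c • g i, h1, ?_, ?_⟩
    · intro i s m
      simp only [LinearMap.smul_apply, smul_eq_mul, h2 i s m]
      ring
    · simp only [LinearMap.smul_apply, smul_eq_mul, ← Finset.mul_sum, h3, smul_eq_mul]

end Aux

/-- `R_φ` is a direct summand of a permutation `RG`-module if and only if
`R = Σ_{H ≤ G} [G:H]·(I^φ_H)²`. -/
theorem stmt5 (R : Type*) [CommRing R] (G : Type*) [Group G] [Finite G] (φ : G →* Rˣ) :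
    IsPermSummand R G φ ↔
      (⨆ H : Subgroup G, Ideal.span {((H.index : ℕ) : R)} * (Iphi φ H) ^ 2) = ⊤ := by
  constructor
  · rintro ⟨n, Hs, x, g, hx, hg, hsum⟩
    rw [Ideal.eq_top_iff_one, ← hsum]
    exact Ideal.sum_mem _ fun i _ =>
      Submodule.mem_iSup_of_mem (Hs i) (perm_mem φ (Hs i) (x i) (g i) (hx i) (hg i))
  · intro htop
    have hle : (⨆ H : Subgroup G, Ideal.span {((H.index : ℕ) : R)} * (Iphi φ H) ^ 2)
        ≤ PermIdeal φ := by
      refine iSup_le fun H => Ideal.mul_le.mpr fun r hr s hs => ?_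
      obtain ⟨c, hc⟩ := Ideal.mem_span_singleton.mp hr
      rw [hc, mul_comm ((H.index : ℕ) : R) c, mul_assoc]
      refine Ideal.mul_mem_left _ c ?_
      rw [sq] at hs
      refine Submodule.mul_induction_on hs (fun u hu v hv => ?_)
        (fun p q hp hq => by rw [mul_add]; exact add_mem hp hq)
      obtain ⟨xH, gH, h1, h2, h3⟩ := exists_perm φ H hu hv
      exact ⟨PUnit, inferInstance, fun _ => H, fun _ => xH, fun _ => gH,
        fun _ => h1, fun _ => h2, by simpa using h3⟩
    have h1 : PermElt φ (1 : R) := hle (htop ▸ Submodule.mem_top)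
    obtain ⟨ι, hι, Hs, x, g, hx, hg, hsum⟩ := h1
    letI := hι
    let e := Fintype.equivFin ι
    refine ⟨Fintype.card ι, fun i => Hs (e.symm i), fun i => x (e.symm i),
      fun i => g (e.symm i), fun i s => hx _ s, fun i s m => hg _ s m, ?_⟩
    rw [← hsum]
    show (∑ i : Fin (Fintype.card ι), g (e.symm i) (x (e.symm i)))
      = (@Finset.univ ι hι).sum fun i => g i (x i)
    exact Fintype.sum_equiv e.symm (fun i => g (e.symm i) (x (e.symm i)))
      (fun j => g j (x j)) fun i => rfl
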